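/- Let μ, γ ∈ ℝ and δ ∈ [-1,1). If U₁, U₂ ∈ C¹((δ,1)) both satisfy the reduced no-swirl equation with parameter μ on (δ,1), and for i = 1, 2 one has lim_{x→1⁻} Uᵢ(x) = 0 and lim_{x→1⁻} Uᵢ'(x) = γ, then U₁(x) = U₂(x) for all x ∈ (δ,1). -/

import Mathlib

open Set Filter Topology

/-- Uniqueness of C¹ solutions of the reduced no-swirl equation on (δ,1) with the
same boundary behavior at x = 1. -/
theorem stmt0 (μ γ δ : ℝ) (hδ₁ : -1 ≤ δ) (hδ₂ : δ < 1)
    (U₁ U₁' U₂ U₂' : ℝ → ℝ)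
    (hU₁ : ∀ x ∈ Ioo δ 1, HasDerivAt U₁ (U₁' x) x)
    (hU₁' : ContinuousOn U₁' (Ioo δ 1))
    (hU₂ : ∀ x ∈ Ioo δ 1, HasDerivAt U₂ (U₂' x) x)
    (hU₂' : ContinuousOn U₂' (Ioo δ 1))
    (heq₁ : ∀ x ∈ Ioo δ 1,
      (1 - x ^ 2) * U₁' x + 2 * x * U₁ x + (1 / 2) * (U₁ x) ^ 2 = μ * (1 - x) ^ 2)
    (heq₂ : ∀ x ∈ Ioo δ 1,
      (1 - x ^ 2) * U₂' x + 2 * x * U₂ x + (1 / 2) * (U₂ x) ^ 2 = μ * (1 - x) ^ 2)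
    (hlim₁0 : Tendsto U₁ (𝓝[<] 1) (𝓝 0))
    (hlim₁γ : Tendsto U₁' (𝓝[<] 1) (𝓝 γ))
    (hlim₂0 : Tendsto U₂ (𝓝[<] 1) (𝓝 0))
    (hlim₂γ : Tendsto U₂' (𝓝[<] 1) (𝓝 γ)) :
    ∀ x ∈ Ioo δ 1, U₁ x = U₂ x := by
  -- basic positivity facts
  have hpos : ∀ x ∈ Ioo δ 1, (0:ℝ) < 1 - x ∧ (0:ℝ) < 1 + x := by
    intro x hx
    constructor <;> [linarith [hx.2]; linarith [hx.1]]
  set g : ℝ → ℝ := fun x => (U₁ x - U₂ x) / (1 - x) with hgdef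
  set b : ℝ → ℝ := fun x => ((1 - x) - (U₁ x + U₂ x) / 2) / ((1 + x) * (1 - x)) with hbdef
  have hmem : Ioo δ 1 ∈ 𝓝[<] (1:ℝ) := Ioo_mem_nhdsLT_of_mem ⟨hδ₂, le_refl 1⟩
  -- derivative of g
  have hgd : ∀ x ∈ Ioo δ 1, HasDerivAt g (b x * g x) x := by
    intro x hx
    obtain ⟨h1, h2⟩ := hpos x hx
    have key : (1 - x ^ 2) * (U₁' x - U₂' x)
        + (2 * x + (U₁ x + U₂ x) / 2) * (U₁ x - U₂ x) = 0 := by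
      linear_combination heq₁ x hx - heq₂ x hx
    have hd : HasDerivAt g
        (((U₁' x - U₂' x) * (1 - x) - (U₁ x - U₂ x) * (-1)) / (1 - x) ^ 2) x := by
      exact HasDerivAt.div ((hU₁ x hx).sub (hU₂ x hx))
        ((hasDerivAt_id x).const_sub 1) (by linarith)
    convert hd using 1
    have e1 : (1:ℝ) - x ≠ 0 := by linarith
    have e2 : (1:ℝ) + x ≠ 0 := by linarith
    simp only [hgdef, hbdef]
    field_simp
    ring_nf
    nlinarith [key]
  -- L'Hôpital-type limit
  have hlh : ∀ U U' : ℝ → ℝ, (∀ x ∈ Ioo δ 1, HasDerivAt U (U' x) x) →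
      Tendsto U (𝓝[<] 1) (𝓝 0) → Tendsto U' (𝓝[<] 1) (𝓝 γ) →
      Tendsto (fun x => U x / (1 - x)) (𝓝[<] 1) (𝓝 (-γ)) := by
    intro U U' hU h0 hγ
    apply HasDerivAt.lhopital_zero_nhdsLT (f' := U') (g' := fun _ => (-1:ℝ))
    · exact eventually_of_mem hmem hU
    · exact Eventually.of_forall fun x => (hasDerivAt_id x).const_sub 1
    · exact Eventually.of_forall fun x => by norm_num
    · exact h0
    · have : Tendsto (fun x : ℝ => 1 - x) (𝓝 1) (𝓝 (1 - 1)) :=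
        (continuous_const.sub continuous_id).tendsto 1
      simpa using this.mono_left nhdsWithin_le_nhds
    · simpa [div_neg, neg_neg] using hγ.neg
  have hl1 := hlh U₁ U₁' hU₁ hlim₁0 hlim₁γ
  have hl2 := hlh U₂ U₂' hU₂ hlim₂0 hlim₂γ
  -- limit of g
  have hg0 : Tendsto g (𝓝[<] 1) (𝓝 0) := by
    have := (hl1.sub hl2).congr (fun x => (sub_div (U₁ x) (U₂ x) (1 - x)).symm)
    simpa using this
  -- limit of b
  have hb1 : Tendsto b (𝓝[<] 1) (𝓝 ((1 + γ) / 2)) := by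
    have hnum : Tendsto (fun x => 1 - (U₁ x / (1 - x) + U₂ x / (1 - x)) / 2)
        (𝓝[<] 1) (𝓝 (1 - ((-γ) + (-γ)) / 2)) :=
      tendsto_const_nhds.sub ((hl1.add hl2).div_const 2)
    have hden : Tendsto (fun x : ℝ => 1 + x) (𝓝[<] 1) (𝓝 2) := by
      have : Tendsto (fun x : ℝ => 1 + x) (𝓝 1) (𝓝 (1 + 1)) :=
        (continuous_const.add continuous_id).tendsto 1
      simpa [one_add_one_eq_two] using this.mono_left nhdsWithin_le_nhds
    have h := hnum.div hden two_ne_zero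
    rw [show (1 - ((-γ) + (-γ)) / 2) / 2 = (1 + γ) / 2 by ring] at h
    refine h.congr' ?_
    filter_upwards [hmem] with x hx
    obtain ⟨h1, h2⟩ := hpos x hx
    simp only [hbdef]
    field_simp
    simp only [Pi.div_apply]
    field_simp
  -- continuity of b on Ioo δ 1
  have hc1 : ContinuousOn U₁ (Ioo δ 1) := fun x hx =>
    (hU₁ x hx).continuousAt.continuousWithinAt
  have hc2 : ContinuousOn U₂ (Ioo δ 1) := fun x hx =>
    (hU₂ x hx).continuousAt.continuousWithinAt
  have hbc : ContinuousOn b (Ioo δ 1) := by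
    apply ContinuousOn.div
    · exact (continuousOn_const.sub continuousOn_id).sub ((hc1.add hc2).div_const 2)
    · exact (continuousOn_const.add continuousOn_id).mul
        (continuousOn_const.sub continuousOn_id)
    · intro x hx
      obtain ⟨h1, h2⟩ := hpos x hx
      positivity
  -- main argument
  intro x₀ hx₀
  -- bound on b near 1
  have hBev : ∀ᶠ x in 𝓝[<] (1:ℝ), |b x| ≤ |(1 + γ) / 2| + 1 := by
    have := hb1.abs.eventually_le_const (lt_add_one _)
    exact this
  obtain ⟨c, hc1', hcsub⟩ := mem_nhdsLT_iff_exists_Ioo_subset.mp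
    (inter_mem hBev hmem)
  -- c ∈ Iio 1
  set c' : ℝ := max c x₀ with hc'def
  have hc'1 : c' < 1 := max_lt hc1' hx₀.2
  have hIcc : Icc x₀ c' ⊆ Ioo δ 1 := fun y hy =>
    ⟨hx₀.1.trans_le hy.1, hy.2.trans_lt hc'1⟩
  obtain ⟨B₂, hB₂⟩ := (isCompact_Icc : IsCompact (Icc x₀ c')).exists_bound_of_continuousOn
    (hbc.mono hIcc)
  set M : ℝ := max (|(1 + γ) / 2| + 1) B₂ with hMdef
  have hM0 : 0 ≤ M := le_trans (by positivity) (le_max_left _ _)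
  have hMb : ∀ x ∈ Ico x₀ 1, |b x| ≤ M := by
    intro x hx
    rcases le_or_gt x c' with h | h
    · exact le_trans (by simpa [Real.norm_eq_abs] using hB₂ x ⟨hx.1, h⟩) (le_max_right _ _)
    · have hxc : x ∈ Ioo c 1 := ⟨(le_max_left c x₀).trans_lt h, hx.2⟩
      exact le_trans (hcsub hxc).1 (le_max_left _ _)
  -- Gronwall step: |g x₀| ≤ ε * exp (2 * M) for all ε > 0
  have hkey : ∀ ε > (0:ℝ), |g x₀| ≤ ε * Real.exp (2 * M) := by
    intro ε hε
    -- choose a point a ∈ (x₀, 1) with |g a| ≤ ε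
    have hev : ∀ᶠ x in 𝓝[<] (1:ℝ), |g x| ≤ ε ∧ x ∈ Ioo x₀ 1 := by
      have habs : Tendsto (fun x => |g x|) (𝓝[<] (1:ℝ)) (𝓝 0) := by simpa using hg0.abs
      filter_upwards [habs.eventually_le_const hε,
        Ioo_mem_nhdsLT_of_mem ⟨hx₀.2, le_refl 1⟩] with x h1 h2
      exact ⟨h1, h2⟩
    obtain ⟨a, hga, ha⟩ := hev.exists
    have haI : a ∈ Ioo δ 1 := ⟨hx₀.1.trans ha.1, ha.2⟩
    have hax : x₀ ≤ a := ha.1.le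
    -- reversed time function
    set h : ℝ → ℝ := fun t => g (a + x₀ - t) with hhdef
    have hmap : ∀ t ∈ Icc x₀ a, a + x₀ - t ∈ Ioo δ 1 := by
      intro t ht
      constructor
      · have : x₀ ≤ a + x₀ - t := by linarith [ht.2]
        linarith [hx₀.1]
      · have : a + x₀ - t ≤ a := by linarith [ht.1]
        linarith [haI.2]
    have hhd : ∀ t ∈ Icc x₀ a, HasDerivAt h
        (-(b (a + x₀ - t) * g (a + x₀ - t))) t := by
      intro t ht
      have := (hgd _ (hmap t ht)).comp t
        (((hasDerivAt_id t).const_sub (a + x₀)) : HasDerivAt (fun t => a + x₀ - t) (-1) t)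
      simpa [hhdef, mul_comm, Function.comp_def] using this
    have hcont : ContinuousOn h (Icc x₀ a) := fun t ht =>
      (hhd t ht).continuousAt.continuousWithinAt
    have hder : ∀ t ∈ Ico x₀ a, HasDerivWithinAt h
        (-(b (a + x₀ - t) * g (a + x₀ - t))) (Ici t) t := fun t ht =>
      (hhd t ⟨ht.1, ht.2.le⟩).hasDerivWithinAt
    have hbound : ∀ t ∈ Ico x₀ a, ‖-(b (a + x₀ - t) * g (a + x₀ - t))‖ ≤ M * ‖h t‖ + 0 := by
      intro t ht
      have hs : a + x₀ - t ∈ Ico x₀ 1 := by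
        constructor
        · linarith [ht.2]
        · have := hmap t ⟨ht.1, ht.2.le⟩
          exact this.2
      rw [Real.norm_eq_abs, Real.norm_eq_abs, abs_neg, abs_mul, add_zero]
      have : |h t| = |g (a + x₀ - t)| := by simp [hhdef]
      rw [this]
      exact mul_le_mul_of_nonneg_right (hMb _ hs) (abs_nonneg _)
    have hga' : ‖h x₀‖ ≤ ε := by
      simp only [hhdef, Real.norm_eq_abs]
      simpa using hga
    have := norm_le_gronwallBound_of_norm_deriv_right_le hcont hder hga' hbound a
      ⟨hax, le_refl a⟩
    rw [gronwallBound_ε0] at this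
    have hgx0 : ‖h a‖ = |g x₀| := by simp [hhdef, Real.norm_eq_abs]
    rw [hgx0] at this
    refine this.trans ?_
    have h2 : M * (a - x₀) ≤ 2 * M := by nlinarith [ha.2, hx₀.1, hδ₁]
    exact mul_le_mul_of_nonneg_left (Real.exp_le_exp.mpr h2) hε.le
  -- conclude g x₀ = 0
  have hgz : g x₀ = 0 := by
    by_contra hne
    have habs : 0 < |g x₀| := abs_pos.mpr hne
    have hC : (0:ℝ) < Real.exp (2 * M) := Real.exp_pos _
    have := hkey (|g x₀| / (2 * Real.exp (2 * M))) (by positivity)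
    rw [div_mul_eq_mul_div, mul_comm, mul_div_assoc] at this
    have heq : Real.exp (2 * M) * (|g x₀| / (2 * Real.exp (2 * M))) = |g x₀| / 2 := by
      field_simp
    rw [heq] at this
    linarith
  have h1 : (0:ℝ) < 1 - x₀ := by linarith [hx₀.2]
  have := div_eq_zero_iff.mp hgz
  rcases this with h | h
  · linarith [sub_eq_zero.mp h]
  · linarith
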